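/- Consider the three-node switching system with parameters satisfying the partial-cycle (PC) DSGRN parameter inequalities: l_{XY}·l_{XZ} < l_{XY}·h_{XZ} < θ_{YX} < h_{XY}·l_{XZ} < h_{XY}·h_{XZ}; l_{YX} < θ_{ZY} < θ_{XY} < h_{YX}; and l_{ZY} < h_{ZY} < θ_{XZ}. Then: (i) the system has no equilibrium, i.e., there is no point (x, y, z) with x = a(y)·b(z), y = c(x), z = d(y); and (ii) for every differentiable solution (x, y, z) : [0, ∞) → ℝ³ of the system there exists T ≥ 0 such that z(t) < θ_{XZ} for all t ≥ T (all recurrent dynamics lie in domains where Z is in its low state). -/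

import Mathlib

/-- At the partial-cycle (PC) DSGRN parameter of the example three-node network:
(i) the switching system has no equilibrium, and (ii) along every solution the
variable `Z` is eventually permanently below its threshold `θXZ`. -/
theorem stmt_7 (lXY hXY lXZ hXZ lYX hYX lZY hZY θYX θXY θZY θXZ : ℝ)
    (hlXY : 0 < lXY) (hXY' : lXY < hXY)
    (hlXZ : 0 < lXZ) (hXZ' : lXZ < hXZ)
    (hlYX : 0 < lYX) (hYX' : lYX < hYX)
    (hlZY : 0 < lZY) (hZY' : lZY < hZY)
    (hθYX : 0 < θYX) (hθXY : 0 < θXY) (hθZY : 0 < θZY) (hθXZ : 0 < θXZ)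
    -- PC parameter inequalities
    (hX1 : lXY * lXZ < lXY * hXZ) (hX2 : lXY * hXZ < θYX)
    (hX3 : θYX < hXY * lXZ) (hX4 : hXY * lXZ < hXY * hXZ)
    (hY1 : lYX < θZY) (hY2 : θZY < θXY) (hY3 : θXY < hYX)
    (hZ1 : lZY < hZY) (hZ2 : hZY < θXZ) :
    (¬ ∃ x y z : ℝ,
      x = (if θXY < y then hXY else lXY) * (if θXZ < z then lXZ else hXZ) ∧
      y = (if θYX < x then lYX else hYX) ∧
      z = (if θZY < y then lZY else hZY)) ∧
    (∀ x y z : ℝ → ℝ,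
      (∀ t, 0 ≤ t → HasDerivAt x
        (-x t + (if θXY < y t then hXY else lXY) * (if θXZ < z t then lXZ else hXZ)) t) →
      (∀ t, 0 ≤ t → HasDerivAt y (-y t + (if θYX < x t then lYX else hYX)) t) →
      (∀ t, 0 ≤ t → HasDerivAt z (-z t + (if θZY < y t then lZY else hZY)) t) →
      ∃ T, 0 ≤ T ∧ ∀ t, T ≤ t → z t < θXZ) := by
  have hXYpos : 0 < hXY := hlXY.trans hXY'
  constructor
  · rintro ⟨x, y, z, hx, hy, hz⟩
    by_cases hxθ : θYX < x
    · -- then y = lYX < θZY < θXY, so a(y) = lXY, and x ≤ lXY * hXZ < θYX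
      rw [if_pos hxθ] at hy
      have hyθ : ¬ θXY < y := by rw [hy]; linarith
      rw [if_neg hyθ] at hx
      have hb : (if θXZ < z then lXZ else hXZ) ≤ hXZ := by
        split <;> linarith
      have : x ≤ lXY * hXZ := by
        rw [hx]; exact mul_le_mul_of_nonneg_left hb hlXY.le
      linarith
    · -- y = hYX > θXY, so a(y) = hXY, x ≥ hXY * lXZ > θYX
      rw [if_neg hxθ] at hy
      have hyθ : θXY < y := by rw [hy]; exact hY3
      rw [if_pos hyθ] at hx
      have hb : lXZ ≤ (if θXZ < z then lXZ else hXZ) := by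
        split <;> linarith
      have : hXY * lXZ ≤ x := by
        rw [hx]; exact mul_le_mul_of_nonneg_left hb hXYpos.le
      push_neg at hxθ
      linarith
  · intro x y z hx hy hz
    -- u t = (z t - hZY) * exp t is antitone on [0,∞)
    set u : ℝ → ℝ := fun t => (z t - hZY) * Real.exp t with hu
    have hud : ∀ t, 0 ≤ t → HasDerivAt u
        (((if θZY < y t then lZY else hZY) - hZY) * Real.exp t) t := by
      intro t ht
      have h1 := ((hz t ht).sub_const hZY).mul (Real.hasDerivAt_exp t)
      exact h1.congr_deriv (by ring)
    have hanti : AntitoneOn u (Set.Ici 0) := by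
      apply antitoneOn_of_deriv_nonpos (convex_Ici 0)
      · intro t ht
        exact (hud t ht).continuousAt.continuousWithinAt
      · intro t ht
        rw [interior_Ici] at ht
        exact (hud t (le_of_lt ht)).differentiableAt.differentiableWithinAt
      · intro t ht
        rw [interior_Ici] at ht
        rw [(hud t ht.le).deriv]
        have : (if θZY < y t then lZY else hZY) - hZY ≤ 0 := by split <;> linarith
        exact mul_nonpos_of_nonpos_of_nonneg this (Real.exp_pos t).le
    have key : ∀ t : ℝ, 0 ≤ t → (z t - hZY) * Real.exp t ≤ z 0 - hZY := by
      intro t ht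
      have := hanti (Set.mem_Ici.mpr le_rfl) ht ht
      simpa [hu] using this
    set C := z 0 - hZY with hC
    by_cases hCpos : C ≤ 0
    · refine ⟨0, le_refl 0, fun t ht => ?_⟩
      have h1 := key t ht
      have h2 : (z t - hZY) * Real.exp t ≤ 0 := h1.trans hCpos
      nlinarith [Real.exp_pos t]
    · push_neg at hCpos
      refine ⟨max 0 (Real.log (C / (θXZ - hZY)) + 1), le_max_left _ _, fun t ht => ?_⟩
      have ht0 : 0 ≤ t := le_trans (le_max_left _ _) ht
      have hratio : 0 < C / (θXZ - hZY) := div_pos hCpos (by linarith)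
      have hexp : C / (θXZ - hZY) < Real.exp t := by
        have h1 : Real.log (C / (θXZ - hZY)) + 1 ≤ t := le_trans (le_max_right _ _) ht
        have h2 : Real.log (C / (θXZ - hZY)) < t := by linarith
        calc C / (θXZ - hZY) = Real.exp (Real.log (C / (θXZ - hZY))) :=
              (Real.exp_log hratio).symm
          _ < Real.exp t := Real.exp_lt_exp.mpr h2
      have h1 := key t ht0
      have h3 : C < Real.exp t * (θXZ - hZY) :=
        (div_lt_iff₀ (show (0:ℝ) < θXZ - hZY by linarith)).mp hexp
      nlinarith [Real.exp_pos t]
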